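/- For every pair of integers x, y with x > 1, y > 1 and (x, y) ≠ (3, 2), if the equation x^n - y^k = 1 has no solutions in integers n, k > 1, then there exists a modulus m ≥ 2 such that the congruence x^n - y^k ≡ 1 (mod m) has no solutions in integers n, k > 1. -/

import Mathlib

-- factor out maximal prime power
lemma exists_pow_factor (q : ℕ) (hq : q.Prime) (z : ℤ) (hz : z ≠ 0) :
    ∃ w u, z = (q:ℤ)^w * u ∧ ¬ (q:ℤ) ∣ u := by
  set w := z.natAbs.factorization q with hw
  have hzn : z.natAbs ≠ 0 := Int.natAbs_ne_zero.mpr hz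
  have hd : (q:ℤ)^w ∣ z := by
    have h1 : q^w ∣ z.natAbs := Nat.ordProj_dvd _ _
    have h2 : ((q:ℤ)^w).natAbs ∣ z.natAbs := by simpa [Int.natAbs_pow] using h1
    exact Int.natAbs_dvd_natAbs.mp h2
  refine ⟨w, z / (q:ℤ)^w, (Int.mul_ediv_cancel' hd).symm, ?_⟩
  intro hdvd
  obtain ⟨t, ht⟩ := hdvd
  have h2 : (q:ℤ)^(w+1) ∣ z := by
    refine ⟨t, ?_⟩
    have := Int.mul_ediv_cancel' hd
    rw [pow_succ, mul_assoc, ← ht, this]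
  have h3 : q^(w+1) ∣ z.natAbs := by
    have := Int.natAbs_dvd_natAbs.mpr h2
    simpa [Int.natAbs_pow] using this
  exact Nat.pow_succ_factorization_not_dvd hzn hq h3

lemma not_dvd_of_ge_factorization (q : ℕ) (hq : q.Prime) (z : ℤ) (hz : z ≠ 0)
    (B : ℕ) (hB : z.natAbs.factorization q + 1 ≤ B) : ¬ (q:ℤ)^B ∣ z := by
  intro hdvd
  have h3 : q^B ∣ z.natAbs := by
    have := Int.natAbs_dvd_natAbs.mpr hdvd
    simpa [Int.natAbs_pow] using this
  exact Nat.pow_succ_factorization_not_dvd (Int.natAbs_ne_zero.mpr hz) hq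
    ((pow_dvd_pow q hB).trans h3)


lemma unit_pow_eq_one_iff (M : ℕ) (hM : 1 < M) (a : ℕ) (h : a.Coprime M) (t : ℕ) :
    (ZMod.unitOfCoprime a h) ^ t = 1 ↔ (M:ℤ) ∣ (a:ℤ)^t - 1 := by
  haveI : NeZero M := ⟨by omega⟩
  rw [← ZMod.intCast_zmod_eq_zero_iff_dvd]
  push_cast
  rw [sub_eq_zero]
  constructor
  · intro h1
    have h2 := congrArg (Units.val) h1
    simpa [ZMod.coe_unitOfCoprime] using h2
  · intro h1
    ext
    simpa [ZMod.coe_unitOfCoprime] using h1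

lemma card_units_two_pow (A : ℕ) (hA : 1 ≤ A) :
    Fintype.card (ZMod (2^A))ˣ = 2^(A-1) := by
  haveI : NeZero (2^A) := ⟨by positivity⟩
  rw [ZMod.card_units_eq_totient, Nat.totient_prime_pow Nat.prime_two (by omega)]
  simp


lemma block_one (q : ℕ) (hq : q.Prime) (Y : ℤ) (v : ℕ) (u : ℤ) (hv : 0 < v)
    (hY : Y = (q:ℤ)^v * u) (hu : ¬ (q:ℤ) ∣ u) (c : ℤ) (hc0 : c ≠ 0)
    (hsol : ∀ k, 2 ≤ k → Y^k ≠ c) :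
    ∃ A, ∀ B, A ≤ B → ∀ k, 2 ≤ k → ¬ (q:ℤ)^B ∣ Y^k - c := by
  obtain ⟨w, c', hcw, hc'⟩ := exists_pow_factor q hq c hc0
  refine ⟨max (w+1) ((Y^(w/v) - c).natAbs.factorization q + 1), fun B hB k hk hdvd => ?_⟩
  have hqz : Prime (q:ℤ) := Int.prime_iff_natAbs_prime.mpr (by simpa using hq)
  have hq0 : ((q:ℤ)) ≠ 0 := by exact_mod_cast hq.ne_zero
  have hYk : Y^k = (q:ℤ)^(k*v) * u^k := by
    rw [hY, mul_pow, ← pow_mul, mul_comm v k]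
  have hw1 : w + 1 ≤ B := le_trans (le_max_left _ _) hB
  rcases lt_trichotomy (k*v) w with h | h | h
  · have key : Y^k - c = (q:ℤ)^(k*v) * (u^k - (q:ℤ)^(w - k*v) * c') := by
      rw [hYk, hcw, mul_sub, ← mul_assoc, ← pow_add]
      congr 3
      omega
    have h2 : (q:ℤ)^(k*v) * (q:ℤ) ∣ (q:ℤ)^(k*v) * (u^k - (q:ℤ)^(w - k*v) * c') := by
      rw [← key, ← pow_succ]
      exact dvd_trans (pow_dvd_pow _ (by omega)) hdvd
    have h3 : (q:ℤ) ∣ u^k - (q:ℤ)^(w - k*v) * c' :=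
      (mul_dvd_mul_iff_left (pow_ne_zero _ hq0)).mp h2
    have h4 : (q:ℤ) ∣ (q:ℤ)^(w - k*v) * c' :=
      dvd_mul_of_dvd_left (dvd_pow_self _ (by omega)) _
    have h5 : (q:ℤ) ∣ u^k := by
      have := dvd_add h3 h4
      simpa using this
    exact hu (hqz.dvd_of_dvd_pow h5)
  · have hk0 : k = w / v := by rw [← h, Nat.mul_div_cancel k hv]
    have hD : Y^k - c ≠ 0 := sub_ne_zero.mpr (hsol k hk)
    refine not_dvd_of_ge_factorization q hq _ hD B ?_ hdvd
    rw [hk0] at hD ⊢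
    exact le_trans (le_max_right _ _) hB
  · have key : Y^k - c = (q:ℤ)^w * ((q:ℤ)^(k*v - w) * u^k - c') := by
      rw [hYk, hcw, mul_sub, ← mul_assoc, ← pow_add]
      congr 3
      omega
    have h2 : (q:ℤ)^w * (q:ℤ) ∣ (q:ℤ)^w * ((q:ℤ)^(k*v - w) * u^k - c') := by
      rw [← key, ← pow_succ]
      exact dvd_trans (pow_dvd_pow _ (by omega)) hdvd
    have h3 : (q:ℤ) ∣ (q:ℤ)^(k*v - w) * u^k - c' :=
      (mul_dvd_mul_iff_left (pow_ne_zero _ hq0)).mp h2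
    have h4 : (q:ℤ) ∣ (q:ℤ)^(k*v - w) * u^k :=
      dvd_mul_of_dvd_left (dvd_pow_self _ (by omega)) _
    have h5 : (q:ℤ) ∣ c' := by
      have := dvd_sub h4 h3
      simpa using this
    exact hc' h5

lemma block_many (q : ℕ) (hq : q.Prime) (X Y : ℤ) (hX : 2 ≤ X) (v : ℕ) (u : ℤ) (hv : 0 < v)
    (hY : Y = (q:ℤ)^v * u) (hu : ¬(q:ℤ) ∣ u)
    (hnosol : ∀ n k : ℕ, 2 ≤ n → 2 ≤ k → Y^k ≠ X^n - 1) (N : ℕ) :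
    ∃ A, ∀ B, A ≤ B → ∀ n, 2 ≤ n → n < N → ∀ k, 2 ≤ k → ¬ (q:ℤ)^B ∣ Y^k - (X^n - 1) := by
  induction N with
  | zero => exact ⟨0, fun B _ n _ h => by omega⟩
  | succ N ih =>
    obtain ⟨A₁, h₁⟩ := ih
    by_cases h2N : 2 ≤ N
    · have hc0 : (X^N - 1 : ℤ) ≠ 0 := by
        have h1 : (1:ℤ) < X^N := one_lt_pow₀ (by omega) (by linarith)
        omega
      obtain ⟨A₂, h₂⟩ := block_one q hq Y v u hv hY hu (X^N - 1) hc0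
        (fun k hk => hnosol N k h2N hk)
      refine ⟨max A₁ A₂, fun B hB n hn hnN k hk => ?_⟩
      rcases Nat.lt_or_ge n N with h | h
      · exact h₁ B (le_trans (le_max_left _ _) hB) n hn h k hk
      · have : n = N := by omega
        subst this
        exact h₂ B (le_trans (le_max_right _ _) hB) k hk
    · exact ⟨A₁, fun B hB n hn hnN k hk => h₁ B hB n hn (by omega) k hk⟩


lemma odd_pow2_mod8 (X : ℕ) (hX : X % 2 = 1) (j : ℕ) (hj : 1 ≤ j) :
    ∃ c, X^(2^j) = 8*c + 1 := by
  obtain ⟨j', rfl⟩ : ∃ j', j = j' + 1 := ⟨j-1, by omega⟩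
  have h1 : X^(2^(j'+1)) = (X^(2^(j'+1-1)))^2 := by
    simp only [Nat.add_sub_cancel]
    rw [pow_succ, pow_mul]
  have h2 : (X^(2^(j'+1-1))) % 2 = 1 := Nat.odd_iff.mp ((Nat.odd_iff.mpr hX).pow)
  obtain ⟨b, hb⟩ : ∃ b, X^(2^(j'+1-1)) = 2*b+1 := ⟨X^(2^(j'+1-1))/2, by omega⟩
  obtain ⟨d, hd⟩ := Nat.even_mul_succ_self b
  refine ⟨d, ?_⟩
  rw [h1, hb]
  nlinarith [hd]

lemma find_ell (X Y : ℕ) (hX3 : 3 ≤ X) (hXodd : X % 2 = 1) (hY : 1 ≤ Y) :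
    ∃ j ℓ, 1 ≤ j ∧ ℓ.Prime ∧ ℓ ≠ 2 ∧ ℓ ∣ X^(2^j) + 1 ∧ ¬ ℓ ∣ Y := by
  by_contra hcon
  push_neg at hcon
  set S := Y.primeFactors with hS
  set F := Finset.Icc 1 (S.card + 1) with hF
  have hfacts : ∀ j, 1 ≤ j → ((X^(2^j)+1)/2).minFac.Prime ∧ ((X^(2^j)+1)/2).minFac ≠ 2 ∧
      ((X^(2^j)+1)/2).minFac ∣ X^(2^j) + 1 := by
    intro j hj1
    obtain ⟨c, hc⟩ := odd_pow2_mod8 X hXodd j hj1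
    have h9 : 9 ≤ X^(2^j) := by
      calc 9 = 3^2 := by norm_num
      _ ≤ X^2 := Nat.pow_le_pow_left hX3 2
      _ ≤ X^(2^j) := Nat.pow_le_pow_right (by omega) (by
          calc 2 = 2^1 := rfl
          _ ≤ 2^j := Nat.pow_le_pow_right (by norm_num) hj1)
    have hd2 : (X^(2^j)+1)/2 = 4*c+1 := by omega
    have hpr := Nat.minFac_prime (by omega : (X^(2^j)+1)/2 ≠ 1)
    refine ⟨hpr, ?_, ?_⟩
    · intro h2
      have := Nat.minFac_dvd ((X^(2^j)+1)/2)
      rw [h2, hd2] at this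
      omega
    · exact (Nat.minFac_dvd _).trans ⟨2, by omega⟩
  have hmaps : ∀ j ∈ F, ((X^(2^j)+1)/2).minFac ∈ S := by
    intro j hj
    rw [hF, Finset.mem_Icc] at hj
    obtain ⟨hpr, hne2, hdvd⟩ := hfacts j hj.1
    have hdY := hcon j _ hj.1 hpr hne2 hdvd
    rw [hS, Nat.mem_primeFactors]
    exact ⟨hpr, hdY, by omega⟩
  have main : ∀ i j, 1 ≤ i → i < j →
      ((X^(2^i)+1)/2).minFac = ((X^(2^j)+1)/2).minFac → False := by
    intro i j hi1 hlt hij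
    obtain ⟨hpri, hne2i, hdvdi⟩ := hfacts i hi1
    obtain ⟨_, _, hdvdj⟩ := hfacts j (by omega)
    set ℓ := ((X^(2^i)+1)/2).minFac with hℓ
    have hdvdj' : ℓ ∣ X^(2^j) + 1 := by rw [hij]; exact hdvdj
    have hcast : ((X:ZMod ℓ))^(2^i) = -1 := by
      have h0 : ((X^(2^i) + 1 : ℕ) : ZMod ℓ) = 0 :=
        (ZMod.natCast_eq_zero_iff _ _).mpr hdvdi
      push_cast at h0
      linear_combination h0
    have hcast2 : ((X:ZMod ℓ))^(2^j) = 1 := by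
      have he : (2:ℕ)^j = 2^i * 2^(j-i) := by rw [← pow_add]; congr 1; omega
      rw [he, pow_mul, hcast]
      have he2 : (2:ℕ)^(j-i) = 2 * 2^(j-i-1) := by
        rw [← pow_succ']
        congr 1
        omega
      rw [he2, pow_mul]
      norm_num
    have hcast3 : ((X:ZMod ℓ))^(2^j) = -1 := by
      have h0 : ((X^(2^j) + 1 : ℕ) : ZMod ℓ) = 0 :=
        (ZMod.natCast_eq_zero_iff _ _).mpr hdvdj'
      push_cast at h0
      linear_combination h0
    have h11 : (1 : ZMod ℓ) = -1 := hcast2.symm.trans hcast3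
    have h2 : ((2:ℕ) : ZMod ℓ) = 0 := by
      push_cast
      linear_combination h11
    have hdd := (ZMod.natCast_eq_zero_iff 2 ℓ).mp h2
    have hℓ2 : ℓ = 2 := ((Nat.prime_dvd_prime_iff_eq hpri Nat.prime_two).mp hdd)
    exact hne2i hℓ2
  have hinj : Set.InjOn (fun j => ((X^(2^j)+1)/2).minFac) F := by
    intro i hi j hj hij
    simp only [hF, Finset.coe_Icc, Set.mem_Icc] at hi hj
    by_contra hne
    rcases Nat.lt_or_ge i j with h | h
    · exact main i j hi.1 h hij
    · exact main j i hj.1 (by omega) hij.symm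
  have hcard := Finset.card_le_card_of_injOn _ hmaps hinj
  rw [hF] at hcard
  simp [Nat.card_Icc] at hcard


lemma caseB (X Y : ℕ) (hX : 2 ≤ X) (hY : 2 ≤ Y) (hXe : X % 2 = 0) (hYo : Y % 2 = 1)
    (hns : ∀ n k : ℕ, 2 ≤ n → 2 ≤ k → (Y:ℤ)^k ≠ (X:ℤ)^n - 1) :
    ∃ m : ℕ, 2 ≤ m ∧ ∀ n k : ℕ, 1 < n → 1 < k →
      ¬ (m : ℤ) ∣ (X:ℤ) ^ n - (Y:ℤ) ^ k - 1 := by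
  have hY3 : 3 ≤ Y := by omega
  set q := Y.minFac with hqdef
  have hq : q.Prime := Nat.minFac_prime (by omega)
  have hqY : q ∣ Y := Nat.minFac_dvd Y
  obtain ⟨v, u, hYvu, hu⟩ := exists_pow_factor q hq (Y:ℤ) (by positivity)
  have hv : 0 < v := by
    rcases Nat.eq_zero_or_pos v with h0 | h
    · exfalso
      apply hu
      have : (Y:ℤ) = u := by rw [hYvu, h0]; ring
      rw [← this]
      exact_mod_cast Int.natCast_dvd_natCast.mpr hqY
    · exact h
  obtain ⟨A, hAdef⟩ : ∃ A, A = Y + 2 := ⟨_, rfl⟩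
  have h2A : Y + 1 < 2^A := by
    have := Nat.lt_two_pow_self (n := Y+2)
    rw [hAdef]
    omega
  have hA2 : 2 ≤ A := by omega
  obtain ⟨A₂, hblock⟩ := block_many q hq (X:ℤ) (Y:ℤ) (by exact_mod_cast hX) v u hv hYvu hu hns A
  refine ⟨2^A * q^A₂, ?_, ?_⟩
  · have h1 : 1 ≤ q^A₂ := Nat.one_le_pow _ _ hq.pos
    have h2 : 2 ≤ 2^A := by
      calc 2 = 2^1 := rfl
      _ ≤ 2^A := Nat.pow_le_pow_right (by norm_num) (by omega)
    calc 2 ≤ 2^A := h2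
    _ = 2^A * 1 := (mul_one _).symm
    _ ≤ 2^A * q^A₂ := Nat.mul_le_mul_left _ h1
  intro n k hn hk hdvd
  set E := (X:ℤ)^n - (Y:ℤ)^k - 1 with hEdef
  have h2E : (2:ℤ)^A ∣ E := by
    have h1 : ((2^A : ℕ):ℤ) ∣ ((2^A * q^A₂ : ℕ):ℤ) := Int.natCast_dvd_natCast.mpr (dvd_mul_right _ _)
    have h2 := h1.trans hdvd
    have h3 : ((2^A : ℕ):ℤ) = (2:ℤ)^A := by push_cast; ring
    rwa [h3] at h2
  have hqE : (q:ℤ)^A₂ ∣ E := by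
    have h1 : ((q^A₂ : ℕ):ℤ) ∣ ((2^A * q^A₂ : ℕ):ℤ) := Int.natCast_dvd_natCast.mpr (dvd_mul_left _ _)
    have h2 := h1.trans hdvd
    have h3 : ((q^A₂ : ℕ):ℤ) = (q:ℤ)^A₂ := by push_cast; ring
    rwa [h3] at h2
  rcases Nat.lt_or_ge n A with hsmall | hlarge
  · refine hblock A₂ le_rfl n (by omega) hsmall k (by omega) ?_
    have h1 : (Y:ℤ)^k - ((X:ℤ)^n - 1) = -E := by rw [hEdef]; ring
    rw [h1]
    exact dvd_neg.mpr hqE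
  · -- n ≥ A
    have h2X : (2:ℤ)^A ∣ (X:ℤ)^n := by
      have h1 : (2:ℤ) ∣ (X:ℤ) := by
        refine Int.natCast_dvd_natCast.mpr ?_ |>.trans dvd_rfl
        exact Nat.dvd_of_mod_eq_zero hXe
      calc (2:ℤ)^A ∣ (2:ℤ)^n := pow_dvd_pow 2 hlarge
      _ ∣ (X:ℤ)^n := pow_dvd_pow_of_dvd h1 n
    have h2Y1 : (2:ℤ)^A ∣ (Y:ℤ)^k + 1 := by
      have h1 : (Y:ℤ)^k + 1 = (X:ℤ)^n - E := by rw [hEdef]; ring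
      rw [h1]
      exact dvd_sub h2X h2E
    rcases Nat.even_or_odd k with hke | hko
    · have hke' := Nat.even_iff.mp hke
      obtain ⟨k', rfl⟩ : ∃ k', k = 2*k' := ⟨k/2, by omega⟩
      have hoY : Odd ((Y:ℤ)^k') := ((Int.odd_coe_nat Y).mpr (Nat.odd_iff.mpr hYo)).pow
      obtain ⟨c, hc⟩ := hoY
      have h4 : (4:ℤ) ∣ (Y:ℤ)^(2*k') + 1 := by
        refine dvd_trans ?_ h2Y1
        have : (4:ℤ) = 2^2 := by norm_num
        rw [this]
        exact pow_dvd_pow 2 hA2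
      have h5 : (Y:ℤ)^(2*k') + 1 = 4*(c*c+c) + 2 := by
        rw [two_mul, pow_add] ; rw [hc]; ring
      rw [h5] at h4
      omega
    · -- k odd
      have h2neg : (2:ℤ)^A ∣ (-(Y:ℤ))^k - 1 := by
        rw [hko.neg_pow]
        have : -(Y:ℤ)^k - 1 = -((Y:ℤ)^k + 1) := by ring
        rw [this]
        exact dvd_neg.mpr h2Y1
      obtain ⟨a, hadef⟩ : ∃ a, a = 2^A - Y := ⟨_, rfl⟩
      have hacast : ((a:ℕ):ℤ) = ((2^A : ℕ) : ℤ) - (Y:ℤ) := by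
        rw [hadef, Nat.cast_sub (by omega : Y ≤ 2^A)]
      have hacast2 : ((a:ℕ):ℤ) = (2:ℤ)^A - (Y:ℤ) := by rw [hacast]; push_cast; ring
      have hdiff : (2:ℤ)^A ∣ (a:ℤ)^k - (-(Y:ℤ))^k := by
        have h1 := sub_dvd_pow_sub_pow (a:ℤ) (-(Y:ℤ)) k
        have h2 : (a:ℤ) - (-(Y:ℤ)) = 2^A := by rw [hacast2]; ring
        rwa [h2] at h1
      have h2a : (2:ℤ)^A ∣ (a:ℤ)^k - 1 := by
        have := dvd_add hdiff h2neg
        rwa [sub_add_sub_cancel] at this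
      have haodd : ¬ 2 ∣ a := by
        have h2e : 2 ∣ 2^A := dvd_pow_self 2 (by rw [hAdef]; omega)
        rw [hadef]
        omega
      have hacop : a.Coprime (2^A) :=
        Nat.Coprime.pow_right A (Nat.coprime_comm.mp ((Nat.prime_two.coprime_iff_not_dvd).mpr haodd))
      have hM : 1 < 2^A := Nat.one_lt_two_pow_iff.mpr (by rw [hAdef]; omega)
      haveI : NeZero (2^A) := ⟨by positivity⟩
      have hu1 : (ZMod.unitOfCoprime a hacop) ^ k = 1 := by
        refine (unit_pow_eq_one_iff (2^A) hM a hacop k).mpr ?_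
        have h3 : ((2^A : ℕ):ℤ) = (2:ℤ)^A := by push_cast; ring
        rw [h3]
        exact h2a
      have he_k : orderOf (ZMod.unitOfCoprime a hacop) ∣ k := orderOf_dvd_of_pow_eq_one hu1
      have he_card : orderOf (ZMod.unitOfCoprime a hacop) ∣ 2^(A-1) := by
        rw [← card_units_two_pow A (by omega)]
        exact orderOf_dvd_card
      obtain ⟨i, hi, hei⟩ := (Nat.dvd_prime_pow Nat.prime_two).mp he_card
      have hi0 : i = 0 := by
        by_contra hi0
        have h1 : 2 ∣ 2^i := dvd_pow_self 2 hi0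
        have h2 : 2 ∣ k := dvd_trans (hei ▸ h1) he_k
        have := Nat.odd_iff.mp hko
        omega
      have he1 : orderOf (ZMod.unitOfCoprime a hacop) = 1 := by rw [hei, hi0, pow_zero]
      have hone : (ZMod.unitOfCoprime a hacop) ^ 1 = 1 := by
        rw [← he1]
        exact pow_orderOf_eq_one _
      have hfin : ((2^A : ℕ):ℤ) ∣ (a:ℤ)^1 - 1 := (unit_pow_eq_one_iff (2^A) hM a hacop 1).mp hone
      rw [pow_one] at hfin
      have hapos : (0:ℤ) < (a:ℤ) - 1 := by
        have : 2 ≤ a := by omega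
        have : (2:ℤ) ≤ (a:ℤ) := by exact_mod_cast this
        omega
      have hle := Int.le_of_dvd hapos hfin
      have hYc : (2:ℤ) ≤ (Y:ℤ) := by exact_mod_cast hY
      rw [hacast] at hle
      omega


lemma caseC (X Y : ℕ) (hX : 2 ≤ X) (hY : 2 ≤ Y) (hXo : X % 2 = 1) (hYe : Y % 2 = 0)
    (hco : Nat.Coprime X Y)
    (hns : ∀ n k : ℕ, 2 ≤ n → 2 ≤ k → (Y:ℤ)^k ≠ (X:ℤ)^n - 1) :
    ∃ m : ℕ, 2 ≤ m ∧ ∀ n k : ℕ, 1 < n → 1 < k →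
      ¬ (m : ℤ) ∣ (X:ℤ) ^ n - (Y:ℤ) ^ k - 1 := by
  have hX3 : 3 ≤ X := by omega
  obtain ⟨j, ℓ, hj1, hℓpr, hℓ2, hℓdvd, hℓY⟩ := find_ell X Y hX3 hXo (by omega)
  -- the odd prime p dividing X
  set p := X.minFac with hpdef
  have hp : p.Prime := Nat.minFac_prime (by omega)
  have hpX : p ∣ X := Nat.minFac_dvd X
  have hpodd : p ≠ 2 := by
    intro h2
    rw [h2] at hpX
    omega
  have hpY : ¬ p ∣ Y := by
    intro h
    have := Nat.dvd_gcd hpX h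
    rw [Nat.coprime_iff_gcd_eq_one.mp hco] at this
    exact hp.one_lt.ne' (Nat.dvd_one.mp this)
  -- parameters
  obtain ⟨A₀, hA₀def⟩ : ∃ A₀, A₀ = X^(2^j) := ⟨_, rfl⟩
  have hA₀ : X^(2^j) < 2^A₀ := hA₀def ▸ Nat.lt_two_pow_self
  have hA₀pos : 1 ≤ A₀ := by
    rw [hA₀def]
    exact Nat.one_le_pow _ _ (by omega)
  obtain ⟨N, hNdef⟩ : ∃ N, N = Y^(2*A₀) := ⟨_, rfl⟩
  have hNp : Y^(2*A₀) < p^N := by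
    calc Y^(2*A₀) = N := hNdef.symm
    _ < 2^N := Nat.lt_two_pow_self
    _ ≤ p^N := Nat.pow_le_pow_left hp.two_le N
  have hN2 : 2 ≤ N := by
    rw [hNdef]
    calc 2 = 2^1 := rfl
    _ ≤ Y^1 := by simpa using hY
    _ ≤ Y^(2*A₀) := Nat.pow_le_pow_right (by omega) (by omega)
  -- 2-adic decomposition of Y
  obtain ⟨v, u, hYvu, hu⟩ := exists_pow_factor 2 Nat.prime_two (Y:ℤ) (by positivity)
  have hv : 0 < v := by
    rcases Nat.eq_zero_or_pos v with h0 | h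
    · exfalso
      apply hu
      have h1 : (Y:ℤ) = u := by rw [hYvu, h0]; ring
      rw [← h1]
      exact ⟨(Y:ℤ)/2, by push_cast; omega⟩
    · exact h
  obtain ⟨A₂, hblock⟩ := block_many 2 Nat.prime_two (X:ℤ) (Y:ℤ) (by exact_mod_cast hX) v u hv
    hYvu hu hns N
  refine ⟨2^(max A₀ A₂) * p^N * ℓ, ?_, ?_⟩
  · have h1 : 1 ≤ p^N * ℓ := Nat.one_le_iff_ne_zero.mpr
      (Nat.mul_ne_zero (pow_ne_zero _ hp.pos.ne') hℓpr.pos.ne')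
    calc 2 = 2^1 := rfl
    _ ≤ 2^(max A₀ A₂) := Nat.pow_le_pow_right (by norm_num) (by omega)
    _ = 2^(max A₀ A₂) * 1 := (mul_one _).symm
    _ ≤ 2^(max A₀ A₂) * (p^N * ℓ) := Nat.mul_le_mul_left _ h1
    _ = 2^(max A₀ A₂) * p^N * ℓ := (mul_assoc _ _ _).symm
  intro n k hn hk hdvd
  set E := (X:ℤ)^n - (Y:ℤ)^k - 1 with hEdef
  have h2E : (2:ℤ)^(max A₀ A₂) ∣ E := by
    have h1 : ((2^(max A₀ A₂) : ℕ):ℤ) ∣ ((2^(max A₀ A₂) * p^N * ℓ : ℕ):ℤ) :=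
      Int.natCast_dvd_natCast.mpr (Dvd.dvd.mul_right (dvd_mul_right _ _) _)
    have h2 := h1.trans hdvd
    have h3 : ((2^(max A₀ A₂) : ℕ):ℤ) = (2:ℤ)^(max A₀ A₂) := by push_cast; ring
    rwa [h3] at h2
  have hpE : (p:ℤ)^N ∣ E := by
    have h1 : ((p^N : ℕ):ℤ) ∣ ((2^(max A₀ A₂) * p^N * ℓ : ℕ):ℤ) :=
      Int.natCast_dvd_natCast.mpr (Dvd.dvd.mul_right (dvd_mul_left _ _) _)
    have h2 := h1.trans hdvd
    have h3 : ((p^N : ℕ):ℤ) = (p:ℤ)^N := by push_cast; ring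
    rwa [h3] at h2
  have hℓE : (ℓ:ℤ) ∣ E := (Int.natCast_dvd_natCast.mpr (dvd_mul_left _ _)).trans hdvd
  rcases Nat.lt_or_ge n N with hsmall | hlarge
  · refine hblock (max A₀ A₂) (le_max_right _ _) n (by omega) hsmall k (by omega) ?_
    have h1 : (Y:ℤ)^k - ((X:ℤ)^n - 1) = -E := by rw [hEdef]; ring
    rw [h1]
    exact dvd_neg.mpr h2E
  · -- n ≥ N : the interesting branch
    have hpXn : (p:ℤ)^N ∣ (X:ℤ)^n := by
      calc (p:ℤ)^N ∣ (p:ℤ)^n := pow_dvd_pow _ hlarge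
      _ ∣ (X:ℤ)^n := pow_dvd_pow_of_dvd (Int.natCast_dvd_natCast.mpr hpX) n
    have hpYk1 : (p:ℤ)^N ∣ (Y:ℤ)^k + 1 := by
      have h1 : (Y:ℤ)^k + 1 = (X:ℤ)^n - E := by rw [hEdef]; ring
      rw [h1]
      exact dvd_sub hpXn hpE
    have hpM : 1 < p^N := Nat.one_lt_pow (by omega) hp.one_lt
    have hYcop : Y.Coprime (p^N) :=
      Nat.Coprime.pow_right N (Nat.coprime_comm.mp ((hp.coprime_iff_not_dvd).mpr hpY))
    haveI : NeZero (p^N) := ⟨pow_ne_zero _ hp.pos.ne'⟩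
    have hcastpN : ((p^N : ℕ):ℤ) = (p:ℤ)^N := by push_cast; ring
    have hp2k : (p:ℤ)^N ∣ (Y:ℤ)^(2*k) - 1 := by
      have h1 : (Y:ℤ)^(2*k) - 1 = ((Y:ℤ)^k + 1) * ((Y:ℤ)^k - 1) := by
        rw [two_mul, pow_add]; ring
      rw [h1]
      exact Dvd.dvd.mul_right hpYk1 _
    have hu2k : (ZMod.unitOfCoprime Y hYcop)^(2*k) = 1 := by
      refine (unit_pow_eq_one_iff (p^N) hpM Y hYcop (2*k)).mpr ?_
      rw [hcastpN]
      exact hp2k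
    have he2k : orderOf (ZMod.unitOfCoprime Y hYcop) ∣ 2*k := orderOf_dvd_of_pow_eq_one hu2k
    have hepos : 0 < orderOf (ZMod.unitOfCoprime Y hYcop) := orderOf_pos _
    have heN : (p:ℤ)^N ∣ (Y:ℤ)^(orderOf (ZMod.unitOfCoprime Y hYcop)) - 1 := by
      rw [← hcastpN]
      exact (unit_pow_eq_one_iff (p^N) hpM Y hYcop _).mp (pow_orderOf_eq_one _)
    -- k must be large
    have hkA₀ : A₀ < k := by
      by_contra hkA
      push_neg at hkA
      have he2k' : orderOf (ZMod.unitOfCoprime Y hYcop) ≤ 2*k := Nat.le_of_dvd (by omega) he2k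
      have hYpos : (1:ℤ) < (Y:ℤ)^(orderOf (ZMod.unitOfCoprime Y hYcop)) :=
        one_lt_pow₀ (by exact_mod_cast hY) (by omega)
      have hbound : ((p^N : ℕ):ℤ) ≤ (Y:ℤ)^(orderOf (ZMod.unitOfCoprime Y hYcop)) - 1 := by
        rw [hcastpN]
        exact Int.le_of_dvd (by omega) heN
      have hmono : (Y:ℤ)^(orderOf (ZMod.unitOfCoprime Y hYcop)) ≤ (Y:ℤ)^(2*A₀) :=
        pow_le_pow_right₀ (by exact_mod_cast (by omega : 1 ≤ Y)) (by omega)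
      have hcastY : (Y:ℤ)^(2*A₀) = ((Y^(2*A₀) : ℕ):ℤ) := by push_cast; ring
      have hfin : ((Y^(2*A₀) : ℕ):ℤ) < ((p^N : ℕ):ℤ) := by exact_mod_cast hNp
      rw [hcastY] at hmono
      omega
    -- hence 2^A₀ ∣ Y^k, so 2^A₀ ∣ X^n - 1
    have h2Yk : (2:ℤ)^A₀ ∣ (Y:ℤ)^k := by
      calc (2:ℤ)^A₀ ∣ (2:ℤ)^k := pow_dvd_pow _ (by omega)
      _ ∣ (Y:ℤ)^k := pow_dvd_pow_of_dvd ⟨(Y:ℤ)/2, by push_cast; omega⟩ k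
    have h2E' : (2:ℤ)^A₀ ∣ E := (pow_dvd_pow 2 (le_max_left A₀ A₂)).trans h2E
    have h2Xn1 : (2:ℤ)^A₀ ∣ (X:ℤ)^n - 1 := by
      have h1 : (X:ℤ)^n - 1 = E + (Y:ℤ)^k := by rw [hEdef]; ring
      rw [h1]
      exact dvd_add h2E' h2Yk
    have hXcop : X.Coprime (2^A₀) :=
      Nat.Coprime.pow_right A₀ (Nat.coprime_comm.mp ((Nat.prime_two.coprime_iff_not_dvd).mpr
        (by omega)))
    have hM₀ : 1 < 2^A₀ := Nat.one_lt_two_pow_iff.mpr (by omega)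
    haveI : NeZero (2^A₀) := ⟨by positivity⟩
    have hcast2A : ((2^A₀ : ℕ):ℤ) = (2:ℤ)^A₀ := by push_cast; ring
    have hun : (ZMod.unitOfCoprime X hXcop)^n = 1 := by
      refine (unit_pow_eq_one_iff (2^A₀) hM₀ X hXcop n).mpr ?_
      rw [hcast2A]
      exact h2Xn1
    have hTn : orderOf (ZMod.unitOfCoprime X hXcop) ∣ n := orderOf_dvd_of_pow_eq_one hun
    have hTcard : orderOf (ZMod.unitOfCoprime X hXcop) ∣ 2^(A₀-1) := by
      rw [← card_units_two_pow A₀ hA₀pos]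
      exact orderOf_dvd_card
    obtain ⟨t, ht, hTt⟩ := (Nat.dvd_prime_pow Nat.prime_two).mp hTcard
    have htj : j + 1 ≤ t := by
      by_contra h'
      push_neg at h'
      have huT : (ZMod.unitOfCoprime X hXcop)^(2^t) = 1 := by
        rw [← hTt]
        exact pow_orderOf_eq_one _
      have hdvd1 : ((2^A₀ : ℕ):ℤ) ∣ (X:ℤ)^(2^t) - 1 :=
        (unit_pow_eq_one_iff (2^A₀) hM₀ X hXcop (2^t)).mp huT
      have h1 : (1:ℤ) < (X:ℤ)^(2^t) :=
        one_lt_pow₀ (by exact_mod_cast hX) (by positivity)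
      have hle := Int.le_of_dvd (by omega) hdvd1
      have hmono : (X:ℤ)^(2^t) ≤ (X:ℤ)^(2^j) :=
        pow_le_pow_right₀ (by exact_mod_cast (by omega : 1 ≤ X))
          (Nat.pow_le_pow_right (by norm_num) (by omega))
      have hcastX : (X:ℤ)^(2^j) = ((X^(2^j) : ℕ):ℤ) := by push_cast; ring
      have hfin : ((X^(2^j) : ℕ):ℤ) < ((2^A₀ : ℕ):ℤ) := by exact_mod_cast hA₀
      rw [hcastX] at hmono
      omega
    have hn2 : 2^(j+1) ∣ n := (pow_dvd_pow 2 htj).trans (hTt ▸ hTn)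
    obtain ⟨s, hs⟩ := hn2
    have hℓx : (ℓ:ℤ) ∣ (X:ℤ)^n - 1 := by
      have h1 : (ℓ:ℤ) ∣ (X:ℤ)^(2^(j+1)) - 1 := by
        have e1 : (X:ℤ)^(2^(j+1)) - 1 = ((X:ℤ)^(2^j) - 1) * ((X:ℤ)^(2^j) + 1) := by
          rw [pow_succ, pow_mul]; ring
        rw [e1]
        have h2 : (ℓ:ℤ) ∣ (X:ℤ)^(2^j) + 1 := by
          have := Int.natCast_dvd_natCast.mpr hℓdvd
          push_cast at this
          exact this
        exact Dvd.dvd.mul_left h2 _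
      have h2 : (X:ℤ)^n - 1 = ((X:ℤ)^(2^(j+1)))^s - 1^s := by
        rw [← pow_mul, ← hs, one_pow]
      rw [h2]
      exact h1.trans (sub_dvd_pow_sub_pow _ _ s)
    have hℓyk : (ℓ:ℤ) ∣ (Y:ℤ)^k := by
      have h1 : (Y:ℤ)^k = ((X:ℤ)^n - 1) - E := by rw [hEdef]; ring
      rw [h1]
      exact dvd_sub hℓx hℓE
    have hℓprZ : Prime (ℓ:ℤ) := Int.prime_iff_natAbs_prime.mpr (by simpa using hℓpr)
    have hℓYZ : (ℓ:ℤ) ∣ (Y:ℤ) := hℓprZ.dvd_of_dvd_pow hℓyk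
    exact hℓY (Int.natCast_dvd_natCast.mp hℓYZ)

theorem catalan_local (x y : ℤ) (hx : 1 < x) (hy : 1 < y)
    (hxy : (x, y) ≠ (3, 2))
    (hnosol : ¬ ∃ n k : ℕ, 1 < n ∧ 1 < k ∧ x ^ n - y ^ k = 1) :
    ∃ m : ℕ, 2 ≤ m ∧ ∀ n k : ℕ, 1 < n → 1 < k →
      ¬ (m : ℤ) ∣ x ^ n - y ^ k - 1 := by
  obtain ⟨X, rfl⟩ : ∃ X : ℕ, x = (X : ℤ) := ⟨x.toNat, (Int.toNat_of_nonneg (by omega)).symm⟩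
  obtain ⟨Y, rfl⟩ : ∃ Y : ℕ, y = (Y : ℤ) := ⟨y.toNat, (Int.toNat_of_nonneg (by omega)).symm⟩
  have hX : 2 ≤ X := by exact_mod_cast hx
  have hY : 2 ≤ Y := by exact_mod_cast hy
  push_neg at hnosol
  have hns : ∀ n k : ℕ, 2 ≤ n → 2 ≤ k → (Y:ℤ)^k ≠ (X:ℤ)^n - 1 := by
    intro n k hn hk h
    exact hnosol n k hn hk (by rw [h]; ring)
  -- case: same parity
  by_cases hpar : X % 2 = Y % 2
  · refine ⟨2, le_refl 2, fun n k hn hk hdvd => ?_⟩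
    have key : (2:ℤ) ∣ 1 := by
      rcases Nat.even_or_odd X with hXe | hXo
      · have hYe : 2 ∣ Y := by
          have := Nat.even_iff.mp hXe
          refine Nat.dvd_of_mod_eq_zero ?_
          omega
        have h1 : (2:ℤ) ∣ (X:ℤ)^n := dvd_pow (by exact_mod_cast Int.natCast_dvd_natCast.mpr hXe.two_dvd) (by omega)
        have h2 : (2:ℤ) ∣ (Y:ℤ)^k := dvd_pow (Int.natCast_dvd_natCast.mpr hYe) (by omega)
        have := dvd_sub (dvd_sub h1 h2) hdvd
        simpa using this
      · have hYo : Y % 2 = 1 := by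
          have := Nat.odd_iff.mp hXo
          omega
        have h1 : (2:ℤ) ∣ (X:ℤ)^n - 1 := by
          refine dvd_trans ?_ (by simpa using sub_dvd_pow_sub_pow (X:ℤ) 1 n)
          have := Nat.odd_iff.mp hXo
          have : ((X:ℤ) - 1) = 2 * ((X:ℤ)/2) := by omega
          exact ⟨(X:ℤ)/2, this⟩
        have h2 : (2:ℤ) ∣ (Y:ℤ)^k - 1 := by
          refine dvd_trans ?_ (by simpa using sub_dvd_pow_sub_pow (Y:ℤ) 1 k)
          have : ((Y:ℤ) - 1) = 2 * ((Y:ℤ)/2) := by omega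
          exact ⟨(Y:ℤ)/2, this⟩
        have := dvd_sub (dvd_sub h1 h2) hdvd
        simpa using this
    have := Int.le_of_dvd (by norm_num) key
    omega
  · -- opposite parity
    by_cases hco : Nat.Coprime X Y
    · rcases Nat.even_or_odd X with hXe | hXo
      · have h1 := Nat.even_iff.mp hXe
        exact caseB X Y hX hY h1 (by omega) hns
      · have h1 := Nat.odd_iff.mp hXo
        exact caseC X Y hX hY h1 (by omega) hco hns
    · -- common prime
      have hg2 : 2 ≤ Nat.gcd X Y := by
        have h0 : Nat.gcd X Y ≠ 0 := fun h => by simp [Nat.gcd_eq_zero_iff] at h; omega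
        have h1 : Nat.gcd X Y ≠ 1 := hco
        omega
      set r := (Nat.gcd X Y).minFac with hr
      have hpr : r.Prime := Nat.minFac_prime (by omega)
      have hrX : r ∣ X := (Nat.minFac_dvd _).trans (Nat.gcd_dvd_left _ _)
      have hrY : r ∣ Y := (Nat.minFac_dvd _).trans (Nat.gcd_dvd_right _ _)
      refine ⟨r, hpr.two_le, fun n k hn hk hdvd => ?_⟩
      have h1 : (r:ℤ) ∣ (X:ℤ)^n := dvd_pow (Int.natCast_dvd_natCast.mpr hrX) (by omega)
      have h2 : (r:ℤ) ∣ (Y:ℤ)^k := dvd_pow (Int.natCast_dvd_natCast.mpr hrY) (by omega)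
      have h3 : (r:ℤ) ∣ 1 := by
        have := dvd_sub (dvd_sub h1 h2) hdvd
        simpa using this
      have := Int.le_of_dvd (by norm_num) h3
      have := hpr.two_le
      omega
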